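/- Consider the k-planted REM with parameters (μ̂ log M, σ̂ √(log M / 2), M, k) where k ≤ M^α for a constant 0 < α < 1. If γ = μ̂/σ̂ > 1 + √α, then the ML estimator (the set of top-k weights) recovers the planted set with probability 1 − o(1); if γ < 1, recovery fails with probability 1 − o(1). -/

import Mathlib

set_option maxHeartbeats 1000000

open Real Filter MeasureTheory ProbabilityTheory Set
open scoped ENNReal NNReal

lemma pdf_ratio (m t x : ℝ) (v : ℝ≥0) (hv : 0 < (v:ℝ)) (ht : m ≤ t) (hx : t ≤ x) :
    gaussianPDFReal m v x ≤ Real.exp (-(t - m)^2 / (2 * v)) * gaussianPDFReal t v x := by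
  unfold gaussianPDFReal
  rw [mul_left_comm]
  gcongr ?_ * ?_
  · rw [← Real.exp_add, Real.exp_le_exp, ← add_div, div_le_div_iff_of_pos_right (by positivity)]
    nlinarith [sq_nonneg (x - t), sq_nonneg (t - m)]

lemma gauss_Ici_le (m t : ℝ) {v : ℝ≥0} (hv : v ≠ 0) (ht : m ≤ t) :
    gaussianReal m v (Set.Ici t) ≤ ENNReal.ofReal (Real.exp (-(t - m)^2 / (2 * ↑v))) := by
  rw [gaussianReal_apply_eq_integral m hv]
  refine ENNReal.ofReal_le_ofReal ?_
  calc ∫ x in Set.Ici t, gaussianPDFReal m v x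
      ≤ ∫ x in Set.Ici t, Real.exp (-(t - m)^2 / (2 * v)) * gaussianPDFReal t v x := by
        refine setIntegral_mono_on ((integrable_gaussianPDFReal m v).integrableOn)
          (((integrable_gaussianPDFReal t v).const_mul _).integrableOn)
          measurableSet_Ici (fun x hx => pdf_ratio m t x v (by positivity) ht hx)
    _ = Real.exp (-(t - m)^2 / (2 * v)) * ∫ x in Set.Ici t, gaussianPDFReal t v x := by
        rw [integral_const_mul]
    _ ≤ Real.exp (-(t - m)^2 / (2 * v)) * ∫ x, gaussianPDFReal t v x := by
        refine mul_le_mul_of_nonneg_left ?_ (by positivity)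
        exact setIntegral_le_integral (integrable_gaussianPDFReal t v)
          (Filter.Eventually.of_forall (gaussianPDFReal_nonneg t v))
    _ = Real.exp (-(t - m)^2 / (2 * v)) := by
        rw [integral_gaussianPDFReal_eq_one t hv, mul_one]

lemma pdf_ratio' (m t x : ℝ) (v : ℝ≥0) (hv : 0 < (v:ℝ)) (ht : t ≤ m) (hx : x ≤ t) :
    gaussianPDFReal m v x ≤ Real.exp (-(m - t)^2 / (2 * v)) * gaussianPDFReal t v x := by
  unfold gaussianPDFReal
  rw [mul_left_comm]
  gcongr ?_ * ?_
  · rw [← Real.exp_add, Real.exp_le_exp, ← add_div, div_le_div_iff_of_pos_right (by positivity)]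
    nlinarith [sq_nonneg (t - x), sq_nonneg (m - t)]

lemma gauss_Iic_le (m t : ℝ) {v : ℝ≥0} (hv : v ≠ 0) (ht : t ≤ m) :
    gaussianReal m v (Set.Iic t) ≤ ENNReal.ofReal (Real.exp (-(m - t)^2 / (2 * ↑v))) := by
  rw [gaussianReal_apply_eq_integral m hv]
  refine ENNReal.ofReal_le_ofReal ?_
  calc ∫ x in Set.Iic t, gaussianPDFReal m v x
      ≤ ∫ x in Set.Iic t, Real.exp (-(m - t)^2 / (2 * v)) * gaussianPDFReal t v x := by
        refine setIntegral_mono_on ((integrable_gaussianPDFReal m v).integrableOn)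
          (((integrable_gaussianPDFReal t v).const_mul _).integrableOn)
          measurableSet_Iic (fun x hx => pdf_ratio' m t x v (by positivity) ht hx)
    _ = Real.exp (-(m - t)^2 / (2 * v)) * ∫ x in Set.Iic t, gaussianPDFReal t v x := by
        rw [integral_const_mul]
    _ ≤ Real.exp (-(m - t)^2 / (2 * v)) * ∫ x, gaussianPDFReal t v x := by
        refine mul_le_mul_of_nonneg_left ?_ (by positivity)
        exact setIntegral_le_integral (integrable_gaussianPDFReal t v)
          (Filter.Eventually.of_forall (gaussianPDFReal_nonneg t v))
    _ = Real.exp (-(m - t)^2 / (2 * v)) := by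
        rw [integral_gaussianPDFReal_eq_one t hv, mul_one]

lemma gauss_Ioi_ge (t : ℝ) {v : ℝ≥0} (hv : v ≠ 0) (ht : 0 ≤ t) :
    ENNReal.ofReal ((Real.sqrt (2 * π * v))⁻¹ * Real.exp (-(t+1)^2 / (2 * ↑v)))
      ≤ gaussianReal 0 v (Set.Ioi t) := by
  rw [gaussianReal_apply_eq_integral 0 hv]
  refine ENNReal.ofReal_le_ofReal ?_
  have h1 : (Real.sqrt (2 * π * v))⁻¹ * Real.exp (-(t+1)^2 / (2 * ↑v))
      ≤ ∫ x in Set.Ioc t (t+1), gaussianPDFReal 0 v x := by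
    have := setIntegral_ge_of_const_le (μ := volume)
      (f := gaussianPDFReal 0 v) (s := Set.Ioc t (t+1))
      (c := (Real.sqrt (2 * π * v))⁻¹ * Real.exp (-(t+1)^2 / (2 * ↑v)))
      measurableSet_Ioc (by simp)
      (fun x hx => by
        unfold gaussianPDFReal
        refine mul_le_mul_of_nonneg_left ?_ (by positivity)
        rw [Real.exp_le_exp, div_le_div_iff_of_pos_right (by positivity)]
        have h1 := hx.1; have h2 := hx.2
        nlinarith)
      ((integrable_gaussianPDFReal 0 v).integrableOn)
    simpa using this
  refine h1.trans (setIntegral_mono_set ((integrable_gaussianPDFReal 0 v).integrableOn)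
    (Filter.Eventually.of_forall (gaussianPDFReal_nonneg 0 v))
    (Filter.Eventually.of_forall (fun x hx => hx.1)))

lemma pi_box {n : ℕ} (μ : Fin n → Measure ℝ) [∀ i, IsProbabilityMeasure (μ i)]
    (P : Fin n → Prop) [DecidablePred P] (s : Set ℝ) (hs : MeasurableSet s) :
    Measure.pi μ {x | ∀ i, P i → x i ∈ s} = ∏ i, (if P i then μ i s else 1) := by
  have he : {x : Fin n → ℝ | ∀ i, P i → x i ∈ s}
      = Set.pi Set.univ (fun i => if P i then s else Set.univ) := by
    ext x
    simp only [Set.mem_setOf_eq, Set.mem_pi, Set.mem_univ, forall_true_left]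
    constructor
    · intro h i; split_ifs with hp
      · exact h i hp
      · trivial
    · intro h i hp; have := h i; rwa [if_pos hp] at this
  rw [he, Measure.pi_pi]
  refine Finset.prod_congr rfl (fun i _ => ?_)
  split_ifs with hp
  · rfl
  · simp

lemma pi_marginal {n : ℕ} (μ : Fin n → Measure ℝ) [∀ i, IsProbabilityMeasure (μ i)]
    (i : Fin n) (s : Set ℝ) (hs : MeasurableSet s) :
    Measure.pi μ {x | x i ∈ s} = μ i s := by
  classical
  have he : {x : Fin n → ℝ | x i ∈ s} = {x | ∀ j, j = i → x j ∈ s} := by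
    ext x; simp only [Set.mem_setOf_eq]
    exact ⟨fun h j hj => hj ▸ h, fun h => h i rfl⟩
  rw [he, pi_box μ (fun j => j = i) s hs]
  simp [Finset.prod_ite_eq' Finset.univ i (fun j => μ j s)]

lemma filter_range_card (M k : ℕ) :
    ((Finset.range (M + k)).filter (fun i => i < k)).card = k := by
  have : (Finset.range (M + k)).filter (fun i => i < k) = Finset.range k := by
    ext i; simp; omega
  rw [this, Finset.card_range]

lemma filter_range_card' (M k : ℕ) :
    ((Finset.range (M + k)).filter (fun i => ¬ i < k)).card = M := by
  have h := Finset.card_filter_add_card_filter_not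
    (s := Finset.range (M + k)) (p := fun i => i < k)
  rw [filter_range_card, Finset.card_range] at h
  omega

lemma count_sum (M k : ℕ) (a b : ℝ≥0∞) :
    ∑ i : Fin (M + k), (if (i : ℕ) < k then a else b) = k * a + M * b := by
  rw [Fin.sum_univ_eq_sum_range (fun i => if i < k then a else b) (M + k),
    Finset.sum_ite, Finset.sum_const, Finset.sum_const, filter_range_card,
    filter_range_card']
  simp [nsmul_eq_mul]

lemma count_prod (M k : ℕ) (q : ℝ≥0∞) :
    ∏ i : Fin (M + k), (if k ≤ (i : ℕ) then q else 1) = q ^ M := by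
  rw [Fin.prod_univ_eq_prod_range (fun i => if k ≤ i then q else 1) (M + k),
    Finset.prod_ite, Finset.prod_const, Finset.prod_const, one_pow, mul_one]
  have : (Finset.range (M + k)).filter (fun i => k ≤ i)
      = (Finset.range (M + k)).filter (fun i => ¬ i < k) := by
    ext i; simp [not_lt]
  rw [this, filter_range_card']

/-- Probability, in the `k`-planted REM with parameters
`(μ̂ log M, σ̂ √(log M/2), M, k)` (planted set = first `k` indices, w.l.o.g. by
symmetry), that every planted weight exceeds every unbiased weight, i.e. that
the top-`k` (ML) estimator recovers the planted set. -/
noncomputable def kpremSuccess (μHat σHat : ℝ) (k M : ℕ) : ℝ :=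
  ((MeasureTheory.Measure.pi fun i : Fin (M + k) =>
      ProbabilityTheory.gaussianReal (if (i : ℕ) < k then μHat * Real.log M else 0)
        (Real.toNNReal (σHat ^ 2 * Real.log M / 2)))
    {E : Fin (M + k) → ℝ | ∀ i j : Fin (M + k),
      (i : ℕ) < k → k ≤ (j : ℕ) → E j < E i}).toReal

noncomputable def premMeas (μHat σHat : ℝ) (k M : ℕ) : Fin (M + k) → Measure ℝ :=
  fun i => ProbabilityTheory.gaussianReal (if (i : ℕ) < k then μHat * Real.log M else 0)
    (Real.toNNReal (σHat ^ 2 * Real.log M / 2))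

def premSet (k M : ℕ) : Set (Fin (M + k) → ℝ) :=
  {E : Fin (M + k) → ℝ | ∀ i j : Fin (M + k), (i : ℕ) < k → k ≤ (j : ℕ) → E j < E i}

instance (μHat σHat : ℝ) (k M : ℕ) (i : Fin (M + k)) :
    IsProbabilityMeasure (premMeas μHat σHat k M i) := by
  unfold premMeas; infer_instance

lemma kpremSuccess_eq (μHat σHat : ℝ) (k M : ℕ) :
    kpremSuccess μHat σHat k M = (Measure.pi (premMeas μHat σHat k M) (premSet k M)).toReal := rfl

lemma measurable_premSet (k M : ℕ) : MeasurableSet (premSet k M) := by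
  have : premSet k M = ⋂ (i : Fin (M+k)) (j : Fin (M+k)),
      {E : Fin (M+k) → ℝ | (i : ℕ) < k → k ≤ (j : ℕ) → E j < E i} := by
    ext E; simp [premSet, Set.mem_iInter]
  rw [this]
  refine MeasurableSet.iInter fun i => MeasurableSet.iInter fun j => ?_
  by_cases hi : (i : ℕ) < k
  · by_cases hj : k ≤ (j : ℕ)
    · have : {E : Fin (M+k) → ℝ | (i : ℕ) < k → k ≤ (j : ℕ) → E j < E i}
          = {E : Fin (M+k) → ℝ | E j < E i} := by
        ext E; simp [hi, hj]
      rw [this]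
      exact measurableSet_lt (measurable_pi_apply j) (measurable_pi_apply i)
    · have : {E : Fin (M+k) → ℝ | (i : ℕ) < k → k ≤ (j : ℕ) → E j < E i} = Set.univ := by
        ext E; simp [hj]
      rw [this]; exact MeasurableSet.univ
  · have : {E : Fin (M+k) → ℝ | (i : ℕ) < k → k ≤ (j : ℕ) → E j < E i} = Set.univ := by
      ext E; simp [hi]
    rw [this]; exact MeasurableSet.univ

section core
variable (μHat σHat : ℝ) (k M : ℕ) (t : ℝ)

lemma core1 (hv : (Real.toNNReal (σHat ^ 2 * Real.log M / 2)) ≠ 0)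
    (ht0 : 0 ≤ t) (htm : t ≤ μHat * Real.log M) :
    1 - ((k : ℝ) * Real.exp (-(μHat * Real.log M - t)^2
          / (2 * ((Real.toNNReal (σHat ^ 2 * Real.log M / 2)) : ℝ)))
      + (M : ℝ) * Real.exp (-t^2 / (2 * ((Real.toNNReal (σHat ^ 2 * Real.log M / 2)) : ℝ))))
      ≤ kpremSuccess μHat σHat k M := by
  classical
  set vv := Real.toNNReal (σHat ^ 2 * Real.log M / 2) with hvv
  set m := μHat * Real.log M with hm
  set a := Real.exp (-(m - t)^2 / (2 * (vv : ℝ))) with ha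
  set b := Real.exp (-t^2 / (2 * (vv : ℝ))) with hb
  set μs := premMeas μHat σHat k M with hμs
  set B : Fin (M + k) → Set (Fin (M + k) → ℝ) :=
    fun i => {E | E i ∈ (if (i : ℕ) < k then Set.Iic t else Set.Ici t)} with hBdef
  have hsub : (premSet k M)ᶜ ⊆ ⋃ i, B i := by
    intro E hE
    simp only [premSet, Set.mem_compl_iff, Set.mem_setOf_eq, not_forall] at hE
    obtain ⟨i, j, hik, hjk, hle⟩ := hE
    rw [not_lt] at hle
    by_cases h : E i ≤ t
    · exact Set.mem_iUnion.2 ⟨i, by simp [hBdef, if_pos hik, h]⟩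
    · refine Set.mem_iUnion.2 ⟨j, ?_⟩
      have hj' : ¬ ((j : ℕ) < k) := not_lt.2 hjk
      simp only [hBdef, Set.mem_setOf_eq, if_neg hj', Set.mem_Ici]
      linarith [not_le.1 h]
  have hBmeas : ∀ i, Measure.pi μs (B i)
      ≤ if (i : ℕ) < k then ENNReal.ofReal a else ENNReal.ofReal b := by
    intro i
    by_cases hik : (i : ℕ) < k
    · rw [if_pos hik]
      have hmarg := pi_marginal μs i (Set.Iic t) measurableSet_Iic
      have : B i = {x | x i ∈ Set.Iic t} := by simp [hBdef, if_pos hik]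
      rw [this, hmarg]
      have : μs i = gaussianReal m vv := by simp [hμs, premMeas, if_pos hik, hm, hvv]
      rw [this]
      exact gauss_Iic_le m t hv htm
    · rw [if_neg hik]
      have hmarg := pi_marginal μs i (Set.Ici t) measurableSet_Ici
      have : B i = {x | x i ∈ Set.Ici t} := by simp [hBdef, if_neg hik]
      rw [this, hmarg]
      have : μs i = gaussianReal 0 vv := by simp [hμs, premMeas, if_neg hik, hvv]
      rw [this]
      have h0 := gauss_Ici_le 0 t hv ht0
      simpa using h0
  have hunion : Measure.pi μs ((premSet k M)ᶜ)
      ≤ (k : ℝ≥0∞) * ENNReal.ofReal a + (M : ℝ≥0∞) * ENNReal.ofReal b := by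
    refine le_trans (measure_mono hsub) (le_trans (measure_iUnion_le _) ?_)
    rw [tsum_fintype]
    refine le_trans (Finset.sum_le_sum (fun i _ => hBmeas i)) ?_
    rw [count_sum]
  have hofr : (k : ℝ≥0∞) * ENNReal.ofReal a + (M : ℝ≥0∞) * ENNReal.ofReal b
      = ENNReal.ofReal ((k : ℝ) * a + (M : ℝ) * b) := by
    rw [ENNReal.ofReal_add (by positivity) (by positivity),
      ENNReal.ofReal_mul (by positivity), ENNReal.ofReal_mul (by positivity),
      ENNReal.ofReal_natCast, ENNReal.ofReal_natCast]
  rw [hofr] at hunion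
  have hcomplR : (Measure.pi μs ((premSet k M)ᶜ)).toReal ≤ (k : ℝ) * a + (M : ℝ) * b :=
    ENNReal.toReal_le_of_le_ofReal (by positivity) hunion
  have hadd : Measure.pi μs (premSet k M) + Measure.pi μs ((premSet k M)ᶜ) = 1 :=
    by rw [measure_add_measure_compl (measurable_premSet k M), measure_univ]
  have hS1 : (Measure.pi μs (premSet k M)).toReal
      + (Measure.pi μs ((premSet k M)ᶜ)).toReal = 1 := by
    rw [← ENNReal.toReal_add (measure_ne_top _ _) (measure_ne_top _ _), hadd, ENNReal.toReal_one]
  rw [kpremSuccess_eq, ← hμs]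
  linarith

lemma core2 (hk : 1 ≤ k) (hv : (Real.toNNReal (σHat ^ 2 * Real.log M / 2)) ≠ 0)
    (hmt : μHat * Real.log M ≤ t) :
    kpremSuccess μHat σHat k M ≤ Real.exp (-(t - μHat * Real.log M)^2
        / (2 * ((Real.toNNReal (σHat ^ 2 * Real.log M / 2)) : ℝ)))
      + (1 - (gaussianReal 0 (Real.toNNReal (σHat ^ 2 * Real.log M / 2))
          (Set.Ioi t)).toReal) ^ M := by
  classical
  set vv := Real.toNNReal (σHat ^ 2 * Real.log M / 2) with hvv
  set m := μHat * Real.log M with hm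
  set μs := premMeas μHat σHat k M with hμs
  have hn : 0 < M + k := by omega
  set i₀ : Fin (M + k) := ⟨0, hn⟩ with hi₀
  have hi₀k : (i₀ : ℕ) < k := by simp [hi₀]; omega
  set A : Set (Fin (M + k) → ℝ) := {E | E i₀ ∈ Set.Ioi t} with hA
  set C : Set (Fin (M + k) → ℝ) := {E | ∀ j : Fin (M + k), k ≤ (j : ℕ) → E j ∈ Set.Iic t}
    with hC
  have hsub : premSet k M ⊆ A ∪ C := by
    intro E hE
    by_cases h : t < E i₀
    · exact Or.inl h
    · refine Or.inr (fun j hj => ?_)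
      exact le_of_lt (lt_of_lt_of_le (hE i₀ j hi₀k hj) (not_lt.1 h))
  set q := gaussianReal 0 vv (Set.Iic t) with hq
  have hμA : Measure.pi μs A ≤ ENNReal.ofReal (Real.exp (-(t - m)^2 / (2 * (vv : ℝ)))) := by
    have hmarg := pi_marginal μs i₀ (Set.Ioi t) measurableSet_Ioi
    rw [hA, hmarg]
    have he : μs i₀ = gaussianReal m vv := by simp [hμs, premMeas, if_pos hi₀k, hm, hvv]
    rw [he]
    exact le_trans (measure_mono Set.Ioi_subset_Ici_self) (gauss_Ici_le m t hv hmt)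
  have hμC : Measure.pi μs C = q ^ M := by
    rw [hC, pi_box μs (fun j => k ≤ (j : ℕ)) (Set.Iic t) measurableSet_Iic]
    rw [← count_prod M k q]
    refine Finset.prod_congr rfl (fun j _ => ?_)
    by_cases hj : k ≤ (j : ℕ)
    · rw [if_pos hj, if_pos hj]
      have : μs j = gaussianReal 0 vv := by simp [hμs, premMeas, if_neg (not_lt.2 hj), hvv]
      rw [this]
    · rw [if_neg hj, if_neg hj]
  have hle : Measure.pi μs (premSet k M) ≤ Measure.pi μs A + Measure.pi μs C :=
    le_trans (measure_mono hsub) (measure_union_le A C)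
  have htr : (Measure.pi μs (premSet k M)).toReal
      ≤ (Measure.pi μs A).toReal + (Measure.pi μs C).toReal := by
    rw [← ENNReal.toReal_add (measure_ne_top _ _) (measure_ne_top _ _)]
    exact ENNReal.toReal_mono (by finiteness) hle
  have hAreal : (Measure.pi μs A).toReal ≤ Real.exp (-(t - m)^2 / (2 * (vv : ℝ))) :=
    ENNReal.toReal_le_of_le_ofReal (by positivity) hμA
  have hq1 : q.toReal = 1 - (gaussianReal 0 vv (Set.Ioi t)).toReal := by
    have hcompl : q = 1 - gaussianReal 0 vv (Set.Ioi t) := by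
      rw [hq, ← Set.compl_Ioi]
      exact prob_compl_eq_one_sub measurableSet_Ioi
    rw [hcompl, ENNReal.toReal_sub_of_le prob_le_one ENNReal.one_ne_top, ENNReal.toReal_one]
  have hCreal : (Measure.pi μs C).toReal
      = (1 - (gaussianReal 0 vv (Set.Ioi t)).toReal) ^ M := by
    rw [hμC, ENNReal.toReal_pow, hq1]
  rw [kpremSuccess_eq, ← hμs]
  calc (Measure.pi μs (premSet k M)).toReal
      ≤ (Measure.pi μs A).toReal + (Measure.pi μs C).toReal := htr
    _ ≤ _ := by rw [hCreal]; exact add_le_add hAreal le_rfl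

end core

lemma natlog_tendsto : Tendsto (fun M : ℕ => Real.log M) atTop atTop :=
  Real.tendsto_log_atTop.comp tendsto_natCast_atTop_atTop

lemma exp_neg_mul_log_tendsto (β : ℝ) (hβ : 0 < β) :
    Tendsto (fun M : ℕ => Real.exp (-(β * Real.log M))) atTop (nhds 0) := by
  refine Real.tendsto_exp_atBot.comp ?_
  exact (tendsto_neg_atBot_iff.2 (natlog_tendsto.const_mul_atTop hβ))

lemma aux_tendsto (a C d : ℝ) (ha : 0 < a) :
    Tendsto (fun x : ℝ => a * x - Real.log x / 2 - C - d / x) atTop atTop := by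
  have hb : ∀ᶠ x : ℝ in atTop, ‖Real.log x‖ ≤ a * ‖x‖ :=
    Real.isLittleO_log_id_atTop.bound ha
  have hev : ∀ᶠ x : ℝ in atTop,
      a / 2 * x - (C + 1) ≤ a * x - Real.log x / 2 - C - d / x := by
    filter_upwards [hb, eventually_ge_atTop (1 : ℝ), eventually_ge_atTop (|d|)]
      with x h1 h2 h3
    have hx : 0 < x := lt_of_lt_of_le one_pos h2
    have hlog : Real.log x ≤ a * x := by
      calc Real.log x ≤ ‖Real.log x‖ := le_abs_self _
        _ ≤ a * ‖x‖ := h1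
        _ = a * x := by rw [Real.norm_eq_abs, abs_of_pos hx]
    have hd : d / x ≤ 1 := by
      rw [div_le_one hx]
      calc d ≤ |d| := le_abs_self d
        _ ≤ x := h3
    nlinarith
  have h2 : Tendsto (fun x : ℝ => a / 2 * x + (-(C + 1))) atTop atTop :=
    tendsto_atTop_add_const_right atTop _
      ((tendsto_id (α := ℝ)).const_mul_atTop (by positivity : (0:ℝ) < a / 2))
  exact tendsto_atTop_mono' atTop hev (h2.congr (fun x => by ring))

lemma kpremSuccess_le_one (μHat σHat : ℝ) (k M : ℕ) : kpremSuccess μHat σHat k M ≤ 1 := by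
  rw [kpremSuccess_eq]
  refine ENNReal.toReal_le_of_le_ofReal one_pos.le ?_
  rw [ENNReal.ofReal_one]
  exact prob_le_one

lemma kpremSuccess_nonneg (μHat σHat : ℝ) (k M : ℕ) : 0 ≤ kpremSuccess μHat σHat k M :=
  ENNReal.toReal_nonneg

lemma log_ge_one {M : ℕ} (hM : 3 ≤ M) : 1 ≤ Real.log M := by
  have h3 : Real.exp 1 < 3 := lt_of_le_of_lt Real.exp_one_lt_d9.le (by norm_num)
  have : (3 : ℝ) ≤ (M : ℝ) := by exact_mod_cast hM
  calc (1:ℝ) ≤ Real.log 3 := (Real.le_log_iff_exp_le (by norm_num)).2 h3.le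
    _ ≤ Real.log M := Real.log_le_log (by norm_num) this

/-- for the `k`-planted REM with `k ≤ M^α`, `0 < α < 1`:
if `γ = μ̂/σ̂ > 1 + √α` the top-`k` estimator recovers the planted set with
probability `1 − o(1)`; if `γ < 1` it fails with probability `1 − o(1)`. -/
theorem stmt9 (μHat σHat α : ℝ) (hμ : 0 < μHat) (hσ : 0 < σHat)
    (hα0 : 0 < α) (hα1 : α < 1) (k : ℕ → ℕ)
    (hk1 : ∀ M : ℕ, 1 ≤ k M) (hkα : ∀ M : ℕ, 2 ≤ M → (k M : ℝ) ≤ (M : ℝ) ^ α) :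
    (1 + Real.sqrt α < μHat / σHat →
      Tendsto (fun M : ℕ => kpremSuccess μHat σHat (k M) M) atTop (nhds 1)) ∧
    (μHat / σHat < 1 →
      Tendsto (fun M : ℕ => kpremSuccess μHat σHat (k M) M) atTop (nhds 0)) := by
  have hγpos : 0 < μHat / σHat := div_pos hμ hσ
  have hμγ : μHat = (μHat / σHat) * σHat := by field_simp
  set γ := μHat / σHat with hγdef
  constructor
  · -- recovery case
    intro hγ
    set c := (γ - Real.sqrt α + 1) / 2 with hc
    have hsa : 0 ≤ Real.sqrt α := Real.sqrt_nonneg α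
    have hsa1 : Real.sqrt α < γ - c := by rw [hc]; linarith
    have hc1 : 1 < c := by rw [hc]; linarith
    have hcγ : c ≤ γ := by rw [hc]; linarith
    set β₁ := (γ - c)^2 - α with hβ₁
    have hβ₁pos : 0 < β₁ := by
      have h := Real.sq_sqrt hα0.le
      rw [hβ₁]; nlinarith
    set β₂ := c^2 - 1 with hβ₂
    have hβ₂pos : 0 < β₂ := by rw [hβ₂]; nlinarith
    have hlow : ∀ᶠ M : ℕ in atTop,
        1 - (Real.exp (-(β₁ * Real.log M)) + Real.exp (-(β₂ * Real.log M)))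
          ≤ kpremSuccess μHat σHat (k M) M := by
      filter_upwards [eventually_ge_atTop 3] with M hM
      have hM0 : (0:ℝ) < M := by exact_mod_cast Nat.lt_of_lt_of_le (by norm_num : 0 < 3) hM
      have hL1 : 1 ≤ Real.log M := log_ge_one hM
      have hLpos : 0 < Real.log M := lt_of_lt_of_le one_pos hL1
      have hvpos : 0 < σHat ^ 2 * Real.log M / 2 := by positivity
      have hv : (Real.toNNReal (σHat ^ 2 * Real.log M / 2)) ≠ 0 :=
        (Real.toNNReal_pos.2 hvpos).ne'
      have hvr : ((Real.toNNReal (σHat ^ 2 * Real.log M / 2)) : ℝ)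
          = σHat ^ 2 * Real.log M / 2 := Real.coe_toNNReal _ hvpos.le
      set t := c * σHat * Real.log M with ht
      have ht0 : 0 ≤ t := by positivity
      have htm : t ≤ μHat * Real.log M := by
        rw [ht, hμγ]
        nlinarith [mul_nonneg (mul_nonneg (sub_nonneg.2 hcγ) hσ.le) hLpos.le]
      have hcore := core1 μHat σHat (k M) M t hv ht0 htm
      have e1 : -(μHat * Real.log M - t)^2
          / (2 * ((Real.toNNReal (σHat ^ 2 * Real.log M / 2)) : ℝ))
          = -((γ - c)^2 * Real.log M) := by
        rw [hvr, ht]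
        rw [hμγ]
        field_simp
      have e2 : -t^2 / (2 * ((Real.toNNReal (σHat ^ 2 * Real.log M / 2)) : ℝ))
          = -(c^2 * Real.log M) := by
        rw [hvr, ht]
        field_simp
      have hkb : (k M : ℝ) ≤ Real.exp (α * Real.log M) := by
        have := hkα M (by omega)
        rwa [Real.rpow_def_of_pos hM0, mul_comm] at this
      have h1 : (k M : ℝ) * Real.exp (-(μHat * Real.log M - t)^2
            / (2 * ((Real.toNNReal (σHat ^ 2 * Real.log M / 2)) : ℝ)))
          ≤ Real.exp (-(β₁ * Real.log M)) := by
        rw [e1]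
        calc (k M : ℝ) * Real.exp (-((γ - c)^2 * Real.log M))
            ≤ Real.exp (α * Real.log M) * Real.exp (-((γ - c)^2 * Real.log M)) :=
              mul_le_mul_of_nonneg_right hkb (Real.exp_pos _).le
          _ = Real.exp (-(β₁ * Real.log M)) := by
              rw [← Real.exp_add]; congr 1; rw [hβ₁]; ring
      have h2 : (M : ℝ) * Real.exp (-t^2
            / (2 * ((Real.toNNReal (σHat ^ 2 * Real.log M / 2)) : ℝ)))
          = Real.exp (-(β₂ * Real.log M)) := by
        rw [e2]
        nth_rewrite 1 [← Real.exp_log hM0]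
        rw [← Real.exp_add]; congr 1; rw [hβ₂]; ring
      linarith
    have hlim : Tendsto (fun M : ℕ =>
        1 - (Real.exp (-(β₁ * Real.log M)) + Real.exp (-(β₂ * Real.log M))))
        atTop (nhds 1) := by
      have := tendsto_const_nhds (x := (1:ℝ)) (f := atTop (α := ℕ)) |>.sub
        ((exp_neg_mul_log_tendsto β₁ hβ₁pos).add (exp_neg_mul_log_tendsto β₂ hβ₂pos))
      simpa using this
    exact tendsto_of_tendsto_of_tendsto_of_le_of_le' hlim tendsto_const_nhds hlow
      (Eventually.of_forall (fun M => kpremSuccess_le_one μHat σHat (k M) M))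
  · -- failure case
    intro hγ
    set c := (γ + 1) / 2 with hc
    have hcpos : 0 < c := by rw [hc]; linarith
    have hγc : γ < c := by rw [hc]; linarith
    have hc1 : c < 1 := by rw [hc]; linarith
    set β₃ := (c - γ)^2 with hβ₃
    have hβ₃pos : 0 < β₃ := by rw [hβ₃]; nlinarith
    set a := 1 - c^2 with haa
    have hapos : 0 < a := by rw [haa]; nlinarith
    set Cc := Real.log (π * σHat^2) / 2 + 2 * c / σHat with hCc
    set d := 1 / σHat^2 with hd
    set E : ℕ → ℝ :=
      fun M => a * Real.log M - Real.log (Real.log M) / 2 - Cc - d / Real.log M with hE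
    have hEtend : Tendsto (fun M : ℕ => Real.exp (E M)) atTop atTop :=
      Real.tendsto_exp_atTop.comp ((aux_tendsto a Cc d hapos).comp natlog_tendsto)
    have hub : ∀ᶠ M : ℕ in atTop,
        kpremSuccess μHat σHat (k M) M
          ≤ Real.exp (-(β₃ * Real.log M)) + Real.exp (-(Real.exp (E M))) := by
      filter_upwards [eventually_ge_atTop 3] with M hM
      have hM0 : (0:ℝ) < M := by exact_mod_cast Nat.lt_of_lt_of_le (by norm_num : 0 < 3) hM
      have hL1 : 1 ≤ Real.log M := log_ge_one hM
      have hLpos : 0 < Real.log M := lt_of_lt_of_le one_pos hL1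
      have hvpos : 0 < σHat ^ 2 * Real.log M / 2 := by positivity
      have hv : (Real.toNNReal (σHat ^ 2 * Real.log M / 2)) ≠ 0 :=
        (Real.toNNReal_pos.2 hvpos).ne'
      have hvr : ((Real.toNNReal (σHat ^ 2 * Real.log M / 2)) : ℝ)
          = σHat ^ 2 * Real.log M / 2 := Real.coe_toNNReal _ hvpos.le
      set t := c * σHat * Real.log M with ht
      have ht0 : 0 ≤ t := by positivity
      have hmt : μHat * Real.log M ≤ t := by
        rw [ht, hμγ]
        nlinarith [mul_nonneg (mul_nonneg (sub_nonneg.2 hγc.le) hσ.le) hLpos.le]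
      have hcore := core2 μHat σHat (k M) M t (hk1 M) hv hmt
      set p := (gaussianReal 0 (Real.toNNReal (σHat ^ 2 * Real.log M / 2))
          (Set.Ioi t)).toReal with hp
      have hp0 : 0 ≤ p := ENNReal.toReal_nonneg
      have hp1 : p ≤ 1 := by
        rw [hp]
        refine ENNReal.toReal_le_of_le_ofReal one_pos.le ?_
        rw [ENNReal.ofReal_one]; exact prob_le_one
      set Dv := (Real.sqrt (2 * π * ((Real.toNNReal (σHat ^ 2 * Real.log M / 2)) : ℝ)))⁻¹
          * Real.exp (-(t+1)^2 / (2 * ((Real.toNNReal (σHat ^ 2 * Real.log M / 2)) : ℝ)))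
        with hDv
      have hDp : Dv ≤ p := by
        rw [hp]
        exact (ENNReal.ofReal_le_iff_le_toReal (measure_ne_top _ _)).1
          (gauss_Ioi_ge t hv ht0)
      -- (1-p)^M ≤ exp (-(M * p)) ≤ exp (-(M * Dv))
      have hpow : (1 - p) ^ M ≤ Real.exp (-((M:ℝ) * Dv)) := by
        calc (1 - p) ^ M ≤ (Real.exp (-p)) ^ M := by
              refine pow_le_pow_left₀ (by linarith) ?_ M
              linarith [Real.add_one_le_exp (-p)]
          _ = Real.exp ((M:ℝ) * (-p)) := by rw [← Real.exp_nat_mul]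
          _ ≤ Real.exp (-((M:ℝ) * Dv)) := by
              apply Real.exp_le_exp.2
              have : (M:ℝ) * Dv ≤ (M:ℝ) * p := by
                apply mul_le_mul_of_nonneg_left hDp hM0.le
              linarith
      -- M * Dv = exp (E M)
      have hMD : (M:ℝ) * Dv = Real.exp (E M) := by
        rw [hDv, hvr]
        have h2v : 2 * π * (σHat ^ 2 * Real.log M / 2) = π * σHat^2 * Real.log M := by ring
        have hy : 0 < π * σHat^2 * Real.log M := by positivity
        have hsqrt : (Real.sqrt (π * σHat^2 * Real.log M))⁻¹
            = Real.exp (-(Real.log (π * σHat^2 * Real.log M) / 2)) := by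
          rw [Real.exp_neg, ← Real.log_sqrt hy.le, Real.exp_log (Real.sqrt_pos.2 hy)]
        have hexp : -(t+1)^2 / (2 * (σHat ^ 2 * Real.log M / 2))
            = -(c^2 * Real.log M + 2 * c / σHat + d / Real.log M) := by
          rw [ht, hd]
          field_simp
          ring
        rw [h2v, hsqrt, hexp]
        nth_rewrite 1 [← Real.exp_log hM0]
        rw [← Real.exp_add, ← Real.exp_add]
        congr 1
        rw [Real.log_mul (by positivity) hLpos.ne', hE, haa, hCc]
        ring
      have e3 : -(t - μHat * Real.log M)^2
          / (2 * ((Real.toNNReal (σHat ^ 2 * Real.log M / 2)) : ℝ))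
          = -(β₃ * Real.log M) := by
        rw [hvr, ht, hβ₃]
        rw [hμγ]
        field_simp
      rw [e3] at hcore
      rw [← hMD]
      calc kpremSuccess μHat σHat (k M) M
          ≤ Real.exp (-(β₃ * Real.log M)) + (1 - p) ^ M := hcore
        _ ≤ Real.exp (-(β₃ * Real.log M)) + Real.exp (-((M:ℝ) * Dv)) := by
            linarith
    have hlim : Tendsto (fun M : ℕ =>
        Real.exp (-(β₃ * Real.log M)) + Real.exp (-(Real.exp (E M))))
        atTop (nhds 0) := by
      have h2 : Tendsto (fun M : ℕ => Real.exp (-(Real.exp (E M)))) atTop (nhds 0) :=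
        Real.tendsto_exp_atBot.comp (tendsto_neg_atBot_iff.2 hEtend)
      have := (exp_neg_mul_log_tendsto β₃ hβ₃pos).add h2
      simpa using this
    exact tendsto_of_tendsto_of_tendsto_of_le_of_le' tendsto_const_nhds hlim
      (Eventually.of_forall (fun M => kpremSuccess_nonneg μHat σHat (k M) M)) hub
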